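/- Fix Ŵ ∈ ℝ^{q×p}, W ∈ ℝ^{q×p}, X ∈ ℝ^{p×n}, and let g(H) = ‖W X − (Ŵ + H) X‖_F². Let L = 2λ_max(X Xᵀ) > 0, η = 1/L, and let P_s denote the hard-thresholding operator keeping the s largest-magnitude entries and zeroing the rest. If ‖H‖₀ ≤ s and H⁺ = P_s(H − η ∇g(H)), then g(H⁺) ≤ g(H). -/

import Mathlib

open Matrix Finset

lemma my_quad_bound {p : ℕ} (S : Matrix (Fin p) (Fin p) ℝ) (hS : S.IsHermitian) (lam : ℝ)
    (hb : ∀ k, hS.eigenvalues k ≤ lam) (v : Fin p → ℝ) :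
    v ⬝ᵥ (S *ᵥ v) ≤ lam * (v ⬝ᵥ v) := by
  set U : Matrix (Fin p) (Fin p) ℝ := (hS.eigenvectorUnitary : Matrix (Fin p) (Fin p) ℝ) with hU
  have hunit : U * star U = 1 := (Matrix.mem_unitaryGroup_iff).mp hS.eigenvectorUnitary.2
  set w : Fin p → ℝ := star U *ᵥ v with hwdef
  have hw : v ᵥ* U = w := by
    ext j
    simp [hwdef, Matrix.vecMul, Matrix.mulVec, dotProduct, Matrix.star_apply, mul_comm]
  have hdiag : Matrix.diagonal (RCLike.ofReal ∘ hS.eigenvalues) = Matrix.diagonal hS.eigenvalues := by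
    congr 1
  have hSpec : S = U * Matrix.diagonal hS.eigenvalues * star U := by
    rw [hU, ← hdiag]; exact hS.spectral_theorem
  have h1 : v ⬝ᵥ (S *ᵥ v) = ∑ k, hS.eigenvalues k * (w k) ^ 2 := by
    conv_lhs => rw [hSpec]
    rw [← Matrix.mulVec_mulVec, ← Matrix.mulVec_mulVec, Matrix.dotProduct_mulVec, hw]
    simp [dotProduct, Matrix.mulVec_diagonal]
    exact Finset.sum_congr rfl fun k _ => by ring
  have h2 : w ⬝ᵥ w = v ⬝ᵥ v := by
    have key : (v ᵥ* U) ⬝ᵥ (star U *ᵥ v) = v ⬝ᵥ v := by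
      rw [Matrix.dotProduct_mulVec, Matrix.vecMul_vecMul, hunit, Matrix.vecMul_one]
    rw [← key, hw]
  have h3 : v ⬝ᵥ v = ∑ k, (w k) ^ 2 := by
    rw [← h2]; simp [dotProduct, sq]
  rw [h1, h3, Finset.mul_sum]
  exact Finset.sum_le_sum fun k _ => mul_le_mul_of_nonneg_right (hb k) (sq_nonneg _)

/-- IHT descent step: with `g(H) = ‖W X − (Ŵ+H) X‖_F²`, `L = 2λ_max(X Xᵀ) > 0`, `η = 1/L`,
and `H⁺ = P_s(H − η ∇g(H))`, if `‖H‖₀ ≤ s` then `g(H⁺) ≤ g(H)`. -/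
theorem stmt_6 (q p n : ℕ) (X : Matrix (Fin p) (Fin n) ℝ)
    (W What : Matrix (Fin q) (Fin p) ℝ)
    (hSig : (X * Xᵀ).IsHermitian) (lam : ℝ)
    (hlam : lam = ⨆ k : Fin p, hSig.eigenvalues k) (hlampos : 0 < lam)
    (s : ℕ) (H Hplus Grad : Matrix (Fin q) (Fin p) ℝ)
    (hH : (Finset.univ.filter fun ij : Fin q × Fin p => H ij.1 ij.2 ≠ 0).card ≤ s)
    (hGrad : Grad = (2 : ℝ) • ((What + H) * (X * Xᵀ)) - (2 : ℝ) • (W * (X * Xᵀ)))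
    (hHplus_supp : (Finset.univ.filter fun ij : Fin q × Fin p => Hplus ij.1 ij.2 ≠ 0).card ≤ s)
    (hHplus_proj : ∀ K : Matrix (Fin q) (Fin p) ℝ,
      (Finset.univ.filter fun ij : Fin q × Fin p => K ij.1 ij.2 ≠ 0).card ≤ s →
      (∑ i, ∑ j, (Hplus i j - (H i j - (1 / (2 * lam)) * Grad i j)) ^ 2)
        ≤ ∑ i, ∑ j, (K i j - (H i j - (1 / (2 * lam)) * Grad i j)) ^ 2) :
    (∑ r, ∑ c, ((W * X - (What + Hplus) * X) r c) ^ 2)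
      ≤ ∑ r, ∑ c, ((W * X - (What + H) * X) r c) ^ 2 := by
  set A : Matrix (Fin q) (Fin n) ℝ := W * X - (What + H) * X with hAdef
  set D : Matrix (Fin q) (Fin p) ℝ := Hplus - H with hDdef
  set DX : Matrix (Fin q) (Fin n) ℝ := D * X with hDXdef
  have hbound : ∀ k, hSig.eigenvalues k ≤ lam := by
    intro k; rw [hlam]
    exact le_ciSup (Set.Finite.bddAbove (Set.finite_range _)) k
  -- matrix identity for the new residual
  have hBmat : W * X - (What + Hplus) * X = A - DX := by
    rw [hAdef, hDXdef, hDdef, Matrix.sub_mul, Matrix.add_mul, Matrix.add_mul]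
    abel
  -- expansion of the objective
  have expand : (∑ r, ∑ c, ((W * X - (What + Hplus) * X) r c) ^ 2)
      = (∑ r, ∑ c, (A r c) ^ 2) - 2 * (∑ r, ∑ c, A r c * DX r c)
        + ∑ r, ∑ c, (DX r c) ^ 2 := by
    rw [hBmat]
    simp only [Matrix.sub_apply, Finset.mul_sum, ← Finset.sum_sub_distrib,
      ← Finset.sum_add_distrib]
    exact Finset.sum_congr rfl fun r _ => Finset.sum_congr rfl fun c _ => by ring
  -- gradient as a matrix
  have hGradm : Grad = (-2 : ℝ) • (A * Xᵀ) := by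
    have hA : A * Xᵀ = W * (X * Xᵀ) - (What + H) * (X * Xᵀ) := by
      rw [hAdef, Matrix.sub_mul, Matrix.mul_assoc, Matrix.mul_assoc]
    rw [hGrad, hA]
    ext i j
    simp [Matrix.sub_apply, Matrix.smul_apply]
    ring
  have hGradij : ∀ i j, Grad i j = -2 * ∑ c, A i c * X j c := by
    intro i j
    rw [hGradm]
    simp [Matrix.smul_apply, Matrix.mul_apply, Matrix.transpose_apply]
  -- pairing identity
  have hpair : ∑ i, ∑ j, Grad i j * D i j = -2 * ∑ r, ∑ c, A r c * DX r c := by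
    rw [Finset.mul_sum]
    refine Finset.sum_congr rfl fun i _ => ?_
    calc ∑ j, Grad i j * D i j
        = ∑ j, ∑ c, -2 * (A i c * X j c) * D i j := by
          refine Finset.sum_congr rfl fun j _ => ?_
          rw [hGradij i j, mul_assoc, Finset.sum_mul, Finset.mul_sum]
          exact Finset.sum_congr rfl fun c _ => by ring
      _ = ∑ c, ∑ j, -2 * (A i c * X j c) * D i j := Finset.sum_comm
      _ = -2 * ∑ c, A i c * DX i c := by
          rw [Finset.mul_sum]
          refine Finset.sum_congr rfl fun c _ => ?_
          rw [hDXdef, Matrix.mul_apply, Finset.mul_sum, Finset.mul_sum]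
          exact Finset.sum_congr rfl fun j _ => by ring
  -- spectral bound
  have hrow : ∀ r, ∑ c, (DX r c) ^ 2 = (D r) ⬝ᵥ ((X * Xᵀ) *ᵥ (D r)) := by
    intro r
    calc ∑ c, (DX r c) ^ 2
        = ∑ c, ∑ j, ∑ k, (D r j * X j c) * (D r k * X k c) := by
          refine Finset.sum_congr rfl fun c _ => ?_
          rw [hDXdef, Matrix.mul_apply, sq, Finset.sum_mul]
          exact Finset.sum_congr rfl fun j _ => by rw [Finset.mul_sum]
      _ = ∑ j, ∑ c, ∑ k, (D r j * X j c) * (D r k * X k c) := Finset.sum_comm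
      _ = ∑ j, ∑ k, ∑ c, (D r j * X j c) * (D r k * X k c) := by
          exact Finset.sum_congr rfl fun j _ => Finset.sum_comm
      _ = (D r) ⬝ᵥ ((X * Xᵀ) *ᵥ (D r)) := by
          simp only [dotProduct, Matrix.mulVec, Matrix.mul_apply,
            Matrix.transpose_apply, Finset.mul_sum, Finset.sum_mul]
          refine Finset.sum_congr rfl fun j _ => Finset.sum_congr rfl fun k _ =>
            Finset.sum_congr rfl fun c _ => by ring
  have hspec : ∑ r, ∑ c, (DX r c) ^ 2 ≤ lam * ∑ i, ∑ j, (D i j) ^ 2 := by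
    rw [Finset.mul_sum]
    refine Finset.sum_le_sum fun r _ => ?_
    rw [hrow r]
    have := my_quad_bound (X * Xᵀ) hSig lam hbound (D r)
    have hd : (D r) ⬝ᵥ (D r) = ∑ j, (D r j) ^ 2 := by
      simp [dotProduct, sq]
    rw [hd] at this
    exact this
  -- projection inequality with K = H
  have hpr := hHplus_proj H hH
  have hprL : (∑ i, ∑ j, (Hplus i j - (H i j - (1 / (2 * lam)) * Grad i j)) ^ 2)
      = (∑ i, ∑ j, (D i j) ^ 2)
        + (1 / lam) * (∑ i, ∑ j, Grad i j * D i j)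
        + (1 / (2 * lam)) ^ 2 * (∑ i, ∑ j, (Grad i j) ^ 2) := by
    simp only [Finset.mul_sum, ← Finset.sum_add_distrib]
    refine Finset.sum_congr rfl fun i _ => Finset.sum_congr rfl fun j _ => ?_
    rw [hDdef, Matrix.sub_apply]
    have hl : lam ≠ 0 := ne_of_gt hlampos
    field_simp
    ring
  have hprR : (∑ i, ∑ j, (H i j - (H i j - (1 / (2 * lam)) * Grad i j)) ^ 2)
      = (1 / (2 * lam)) ^ 2 * (∑ i, ∑ j, (Grad i j) ^ 2) := by
    simp only [Finset.mul_sum]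
    refine Finset.sum_congr rfl fun i _ => Finset.sum_congr rfl fun j _ => by ring
  rw [hprL, hprR] at hpr
  have hkey : (∑ i, ∑ j, Grad i j * D i j) ≤ -lam * ∑ i, ∑ j, (D i j) ^ 2 := by
    have h0 : (∑ i, ∑ j, (D i j) ^ 2) + (1 / lam) * (∑ i, ∑ j, Grad i j * D i j) ≤ 0 := by
      linarith
    have hl : 0 < lam := hlampos
    have h1 : lam * ((∑ i, ∑ j, (D i j) ^ 2) + (1 / lam) * (∑ i, ∑ j, Grad i j * D i j))
        ≤ lam * 0 := mul_le_mul_of_nonneg_left h0 hl.le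
    have h2 : lam * ((∑ i, ∑ j, (D i j) ^ 2) + (1 / lam) * (∑ i, ∑ j, Grad i j * D i j))
        = lam * (∑ i, ∑ j, (D i j) ^ 2) + (∑ i, ∑ j, Grad i j * D i j) := by
      field_simp
    rw [h2, mul_zero] at h1
    linarith
  rw [expand]
  have : -2 * (∑ r, ∑ c, A r c * DX r c) = ∑ i, ∑ j, Grad i j * D i j := hpair.symm
  linarith [hspec, hkey, this]
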